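/- arXiv:2208.04408 — 2 statements merged into one kernel-verified Lean document; each statement's English description precedes it below -/
import Mathlib

section
/- Let G be a finite simple graph on n vertices admitting a partition V(G) = S ∪ D where S is an independent set and D induces a subgraph with independence number at most ℓ. Then G has at most the sum over i ≤ ℓ of binomial(n, i) maximal independent sets. -/
open Finset

/-- `s` is an independent set of `G`. -/
def IsIndepF {V : Type*} (G : SimpleGraph V) (s : Finset V) : Prop :=
  ∀ u ∈ s, ∀ v ∈ s, u ≠ v → ¬ G.Adj u v

/-- `s` is a maximal independent set of `G`. -/
def MaxIndepF {V : Type*} (G : SimpleGraph V) (s : Finset V) : Prop :=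
  IsIndepF G s ∧ ∀ t : Finset V, IsIndepF G t → s ⊆ t → t = s

lemma card_small_sets {V : Type*} [Fintype V] [DecidableEq V] (ℓ : ℕ) :
    ((Finset.univ : Finset (Finset V)).filter (fun s => s.card ≤ ℓ)).card =
      ∑ i ∈ Finset.range (ℓ + 1), Nat.choose (Fintype.card V) i := by
  have h : (Finset.univ : Finset (Finset V)).filter (fun s => s.card ≤ ℓ) =
      (Finset.range (ℓ + 1)).biUnion (fun i => Finset.powersetCard i Finset.univ) := by
    ext s
    simp [Finset.mem_powersetCard, Nat.lt_succ_iff]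
  rw [h, Finset.card_biUnion]
  · simp [Finset.card_powersetCard, Finset.card_univ]
  · intro i _ j _ hij
    simp only [Finset.disjoint_left, Finset.mem_powersetCard]
    rintro s ⟨-, hi⟩ ⟨-, hj⟩
    exact hij (hi ▸ hj ▸ rfl)

/-- if `V(G) = S ∪ D` with `S` independent and the subgraph
induced on `D` having independence number at most `ℓ` (every independent set
contained in `D` has at most `ℓ` vertices), then `G` has at most
`∑_{i ≤ ℓ} C(n, i)` maximal independent sets. -/
theorem stmt3 {V : Type*} [Fintype V] [DecidableEq V] (G : SimpleGraph V) (ℓ : ℕ)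
    (S D : Finset V) (hpart : S ∪ D = Finset.univ) (hdisj : Disjoint S D)
    (hS : IsIndepF G S)
    (hD : ∀ s : Finset V, s ⊆ D → IsIndepF G s → s.card ≤ ℓ) :
    (@Finset.filter _ (fun s => MaxIndepF G s) (Classical.decPred _)
        (Finset.univ : Finset (Finset V))).card ≤
      ∑ i ∈ Finset.range (ℓ + 1), Nat.choose (Fintype.card V) i := by
  classical
  rw [← card_small_sets (V := V) ℓ]
  apply Finset.card_le_card_of_injOn (fun s => s ∩ D)
  · intro s hs
    simp only [Finset.mem_coe, Finset.mem_filter, Finset.mem_univ, true_and] at hs ⊢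
    refine hD _ Finset.inter_subset_right ?_
    intro u hu v hv huv
    exact hs.1 u (Finset.mem_inter.1 hu).1 v (Finset.mem_inter.1 hv).1 huv
  · intro M hM M' hM' heq
    simp only [Finset.mem_coe, Finset.mem_filter, Finset.mem_univ, true_and] at hM hM'
    -- symmetric subset argument
    have key : ∀ A B : Finset V, MaxIndepF G A → MaxIndepF G B → A ∩ D = B ∩ D →
        A ⊆ B := by
      intro A B hA hB hAB v hv
      by_cases hvD : v ∈ D
      · have : v ∈ A ∩ D := Finset.mem_inter.2 ⟨hv, hvD⟩
        rw [hAB] at this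
        exact (Finset.mem_inter.1 this).1
      · have hvS : v ∈ S := by
          have := Finset.mem_univ v
          rw [← hpart, Finset.mem_union] at this
          tauto
        by_contra hvB
        have hindep : IsIndepF G (insert v B) := by
          intro u hu w hw huw hadj
          have inA : ∀ x ∈ B, x ∈ D → x ∈ A := by
            intro x hx hxD
            have : x ∈ B ∩ D := Finset.mem_inter.2 ⟨hx, hxD⟩
            rw [← hAB] at this
            exact (Finset.mem_inter.1 this).1
          have key2 : ∀ x ∈ B, ¬ G.Adj v x := by
            intro x hx hadj
            by_cases hxD : x ∈ D
            · exact hA.1 v hv x (inA x hx hxD) (G.ne_of_adj hadj) hadj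
            · have hxS : x ∈ S := by
                have := Finset.mem_univ x
                rw [← hpart, Finset.mem_union] at this
                tauto
              exact hS v hvS x hxS (G.ne_of_adj hadj) hadj
          rcases Finset.mem_insert.1 hu with rfl | huB
          · rcases Finset.mem_insert.1 hw with rfl | hwB
            · exact huw rfl
            · exact key2 w hwB hadj
          · rcases Finset.mem_insert.1 hw with rfl | hwB
            · exact key2 u huB hadj.symm
            · exact hB.1 u huB w hwB huw hadj
        have := hB.2 _ hindep (Finset.subset_insert _ _)
        exact hvB (this ▸ Finset.mem_insert_self v B)
    exact Finset.Subset.antisymm (key M M' hM hM' heq) (key M' M hM' hM heq.symm)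
end

section
/- Let G be a finite simple graph and let G' be the graph obtained from G by replacing every edge e = uv with a path u–x_e–y_e–v, where x_e and y_e are new vertices (so u x_e, x_e y_e, y_e v are edges of G' and uv is not). Then α(G') = α(G) + |E(G)|. -/
open Finset

/-- The independence number of `G`. -/
noncomputable def alphaF {V : Type*} [Fintype V] (G : SimpleGraph V) : ℕ :=
  Finset.sup (@Finset.filter _ (fun s => IsIndepF G s) (Classical.decPred _) Finset.univ)
    Finset.card

/-- The graph `G'` obtained from `G` by replacing every edge `e = uv` by a path
`u — x_e — y_e — v`, where `x_e = Sum.inr (e, false)` and `y_e = Sum.inr (e, true)`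
are fresh vertices.  For an edge `e`, `(Quot.out e).1` and `(Quot.out e).2` are its
two endpoints.  `fromRel` symmetrizes; original edges `uv` are not edges of `G'`. -/
def subdiv {V : Type*} (G : SimpleGraph V) : SimpleGraph (V ⊕ (G.edgeSet × Bool)) :=
  SimpleGraph.fromRel (fun a b =>
    match a, b with
    | Sum.inl u, Sum.inr (e, b) =>
        (b = false ∧ u = (Quot.out (e : Sym2 V)).1) ∨
        (b = true ∧ u = (Quot.out (e : Sym2 V)).2)
    | Sum.inr (e, b), Sum.inr (e', b') => e = e' ∧ b ≠ b'
    | _, _ => False)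

section aux

variable {V : Type*} (G : SimpleGraph V)

lemma subdiv_not_adj_inl_inl (u v : V) : ¬ (subdiv G).Adj (Sum.inl u) (Sum.inl v) := by
  simp [subdiv, SimpleGraph.fromRel_adj]

lemma subdiv_adj_inl_inr (u : V) (e : G.edgeSet) (b : Bool) :
    (subdiv G).Adj (Sum.inl u) (Sum.inr (e, b)) ↔
      (b = false ∧ u = (Quot.out (e : Sym2 V)).1) ∨ (b = true ∧ u = (Quot.out (e : Sym2 V)).2) := by
  simp [subdiv, SimpleGraph.fromRel_adj]

lemma subdiv_adj_inr_inr (e e' : G.edgeSet) (b b' : Bool) :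
    (subdiv G).Adj (Sum.inr (e, b)) (Sum.inr (e', b')) ↔ e = e' ∧ b ≠ b' := by
  simp [subdiv, SimpleGraph.fromRel_adj]
  tauto

lemma out_adj (e : G.edgeSet) :
    G.Adj (Quot.out (e : Sym2 V)).1 (Quot.out (e : Sym2 V)).2 := by
  have : s((Quot.out (e : Sym2 V)).1, (Quot.out (e : Sym2 V)).2) = (e : Sym2 V) := by
    exact Quot.out_eq _
  rw [← SimpleGraph.mem_edgeSet, this]; exact e.2

lemma card_le_alphaF [Fintype V] {s : Finset V} (hs : IsIndepF G s) : s.card ≤ alphaF G :=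
  Finset.le_sup ((@Finset.mem_filter _ (fun s => IsIndepF G s) (Classical.decPred _) _ s).2
    ⟨Finset.mem_univ _, hs⟩)

lemma exists_alphaF [Fintype V] : ∃ s : Finset V, IsIndepF G s ∧ s.card = alphaF G := by
  have hne : (@Finset.filter _ (fun s => IsIndepF G s) (Classical.decPred _)
      Finset.univ).Nonempty := by
    exact ⟨∅, (@Finset.mem_filter _ (fun s => IsIndepF G s) (Classical.decPred _) _ ∅).2
      ⟨Finset.mem_univ _, fun u hu => by simp at hu⟩⟩
  obtain ⟨b, hb, hb2⟩ := Finset.exists_mem_eq_sup _ hne Finset.card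
  rw [@Finset.mem_filter _ (fun s => IsIndepF G s) (Classical.decPred _)] at hb
  exact ⟨b, hb.2, hb2.symm⟩

end aux

/-- `α(G') = α(G) + |E(G)|` for the edge-subdivision graph `G'`. -/
theorem stmt6 {V : Type*} [Fintype V] [DecidableEq V] (G : SimpleGraph V)
    [DecidableRel G.Adj] :
    alphaF (subdiv G) = alphaF G + G.edgeFinset.card := by
  classical
  have hEcard : (Finset.univ : Finset G.edgeSet).card = G.edgeFinset.card := by
    simp [SimpleGraph.edgeFinset, Set.toFinset_card]
  apply le_antisymm
  · -- upper bound
    obtain ⟨t, ht, htcard⟩ := exists_alphaF (subdiv G)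
    rw [← htcard]
    set A : Finset V := Finset.univ.filter (fun u : V => Sum.inl u ∈ t) with hA
    set Bs : Finset (G.edgeSet × Bool) :=
      Finset.univ.filter (fun p : G.edgeSet × Bool => Sum.inr p ∈ t) with hBs
    set bad : Finset G.edgeSet := Finset.univ.filter
      (fun e : G.edgeSet => (Quot.out (e : Sym2 V)).1 ∈ A ∧ (Quot.out (e : Sym2 V)).2 ∈ A)
      with hbad
    set good : Finset G.edgeSet := Finset.univ.filter
      (fun e : G.edgeSet => ¬ ((Quot.out (e : Sym2 V)).1 ∈ A ∧ (Quot.out (e : Sym2 V)).2 ∈ A))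
      with hgood
    set s : Finset V := A \ bad.image (fun e : G.edgeSet => (Quot.out (e : Sym2 V)).1) with hs
    -- decomposition of t
    have htdecomp : t = A.image Sum.inl ∪ Bs.image Sum.inr := by
      ext x
      cases x with
      | inl u => simp [hA, hBs]
      | inr p => simp [hA, hBs]
    have hcard_t : t.card = A.card + Bs.card := by
      rw [htdecomp, Finset.card_union_of_disjoint, Finset.card_image_of_injective _
        Sum.inl_injective, Finset.card_image_of_injective _ Sum.inr_injective]
      simp [Finset.disjoint_left]
    -- s is independent in G
    have hsind : IsIndepF G s := by
      intro u hu v hv hne hadj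
      rw [hs, Finset.mem_sdiff] at hu hv
      set ee : G.edgeSet := ⟨s(u, v), hadj⟩ with hee
      have hout : s((Quot.out (ee : Sym2 V)).1, (Quot.out (ee : Sym2 V)).2) = s(u, v) := by
        exact Quot.out_eq _
      have hcases : ((Quot.out (ee : Sym2 V)).1 = u ∧ (Quot.out (ee : Sym2 V)).2 = v) ∨
          ((Quot.out (ee : Sym2 V)).1 = v ∧ (Quot.out (ee : Sym2 V)).2 = u) := by
        rwa [Sym2.eq_iff] at hout
      have hbadmem : ee ∈ bad := by
        rw [hbad, Finset.mem_filter]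
        refine ⟨Finset.mem_univ _, ?_, ?_⟩ <;>
          rcases hcases with ⟨h1, h2⟩ | ⟨h1, h2⟩ <;>
            simp only [h1, h2] <;> [exact hu.1; exact hv.1; exact hv.1; exact hu.1]
      have himg : (Quot.out (ee : Sym2 V)).1 ∈ bad.image (fun e : G.edgeSet => (Quot.out (e : Sym2 V)).1) :=
        Finset.mem_image_of_mem _ hbadmem
      rcases hcases with ⟨h1, _⟩ | ⟨h1, _⟩
      · exact hu.2 (h1 ▸ himg)
      · exact hv.2 (h1 ▸ himg)
    -- |A| ≤ |s| + |bad|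
    have hAcard : A.card ≤ s.card + bad.card := by
      calc A.card ≤ (s ∪ bad.image (fun e : G.edgeSet => (Quot.out (e : Sym2 V)).1)).card := by
            apply Finset.card_le_card
            intro u hu
            rw [Finset.mem_union, hs, Finset.mem_sdiff]
            by_cases h : u ∈ bad.image (fun e : G.edgeSet => (Quot.out (e : Sym2 V)).1)
            · exact Or.inr h
            · exact Or.inl ⟨hu, h⟩
        _ ≤ s.card + (bad.image (fun e : G.edgeSet => (Quot.out (e : Sym2 V)).1)).card :=
            Finset.card_union_le _ _
        _ ≤ s.card + bad.card := by
            exact Nat.add_le_add_left (Finset.card_image_le) _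
    -- |Bs| ≤ |good|
    have hBcard : Bs.card ≤ good.card := by
      apply Finset.card_le_card_of_injOn (fun p => p.1)
      · intro p hp
        rw [hBs, Finset.mem_coe, Finset.mem_filter] at hp
        rw [hgood, Finset.mem_coe, Finset.mem_filter]
        refine ⟨Finset.mem_univ _, ?_⟩
        rintro ⟨h1, h2⟩
        rw [hA, Finset.mem_filter] at h1 h2
        obtain ⟨e, b⟩ := p
        cases b with
        | false =>
          exact ht _ h1.2 _ hp.2 (by simp)
            ((subdiv_adj_inl_inr G _ e false).2 (Or.inl ⟨rfl, rfl⟩))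
        | true =>
          exact ht _ h2.2 _ hp.2 (by simp)
            ((subdiv_adj_inl_inr G _ e true).2 (Or.inr ⟨rfl, rfl⟩))
      · intro p hp q hq hpq
        by_contra hne
        simp only [hBs, Finset.coe_filter, Set.mem_setOf_eq] at hp hq
        exact ht _ hp.2 _ hq.2 (by simpa using hne)
          ((subdiv_adj_inr_inr G p.1 q.1 p.2 q.2).2
            ⟨hpq, fun h => hne (Prod.ext hpq h)⟩)
    -- |bad| + |good| = |E|
    have hbg : bad.card + good.card = G.edgeFinset.card := by
      rw [← hEcard, hbad, hgood]
      exact Finset.card_filter_add_card_filter_not _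
    have hsle : s.card ≤ alphaF G := card_le_alphaF G hsind
    omega
  · -- lower bound
    obtain ⟨s, hsind, hscard⟩ := exists_alphaF G
    set f : G.edgeSet → V ⊕ (G.edgeSet × Bool) :=
      fun e => Sum.inr (e, decide ((Quot.out (e : Sym2 V)).1 ∈ s)) with hf
    set t : Finset (V ⊕ (G.edgeSet × Bool)) :=
      s.image Sum.inl ∪ Finset.univ.image f with htdef
    have hfinj : Function.Injective f := by
      intro a b hab
      simp only [hf, Sum.inr.injEq, Prod.mk.injEq] at hab
      exact hab.1
    have htcard : t.card = s.card + G.edgeFinset.card := by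
      rw [htdef, Finset.card_union_of_disjoint, Finset.card_image_of_injective _
        Sum.inl_injective, Finset.card_image_of_injective _ hfinj, Finset.card_univ,
        ← hEcard, Finset.card_univ]
      simp [Finset.disjoint_left, hf]
    have htind : IsIndepF (subdiv G) t := by
      intro x hx y hy hne hadj
      rw [htdef, Finset.mem_union] at hx hy
      have hmem : ∀ z, z ∈ s.image Sum.inl ∪ Finset.univ.image f →
          (∃ u ∈ s, z = Sum.inl u) ∨ (∃ e, z = f e) := by
        intro z hz
        rw [Finset.mem_union] at hz
        rcases hz with hz | hz
        · obtain ⟨u, hu, rfl⟩ := Finset.mem_image.1 hz; exact Or.inl ⟨u, hu, rfl⟩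
        · obtain ⟨e, _, rfl⟩ := Finset.mem_image.1 hz; exact Or.inr ⟨e, rfl⟩
      rcases hmem x (Finset.mem_union.2 hx) with ⟨u, hu, rfl⟩ | ⟨e, rfl⟩ <;>
        rcases hmem y (Finset.mem_union.2 hy) with ⟨v, hv, rfl⟩ | ⟨e', rfl⟩
      · exact subdiv_not_adj_inl_inl G u v hadj
      · rw [hf] at hadj
        rcases (subdiv_adj_inl_inr G u e' _).1 hadj with ⟨hb, hu1⟩ | ⟨hb, hu2⟩
        · rw [decide_eq_false_iff_not] at hb
          exact hb (hu1 ▸ hu)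
        · rw [decide_eq_true_eq] at hb
          exact hsind _ hb _ (hu2 ▸ hu) (G.ne_of_adj (out_adj G e')) (out_adj G e')
      · rw [hf] at hadj
        rcases (subdiv_adj_inl_inr G v e _).1 hadj.symm with ⟨hb, hu1⟩ | ⟨hb, hu2⟩
        · rw [decide_eq_false_iff_not] at hb
          exact hb (hu1 ▸ hv)
        · rw [decide_eq_true_eq] at hb
          exact hsind _ hb _ (hu2 ▸ hv) (G.ne_of_adj (out_adj G e)) (out_adj G e)
      · rw [hf] at hadj
        obtain ⟨rfl, hbb⟩ := (subdiv_adj_inr_inr G e e' _ _).1 hadj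
        exact hbb rfl
    calc alphaF G + G.edgeFinset.card = t.card := by rw [htcard, hscard]
      _ ≤ alphaF (subdiv G) := card_le_alphaF _ htind
end
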